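/- Let I_n be the set of involutions of size n and let fp_n = Σ_{π ∈ I_n} #{i : π(i) = i} be the total number of fixed points over all involutions of size n. Then fp_n/(√n · |I_n|) → 1 as n → ∞. -/

import Mathlib

/-- `ConsecOcc p π i`: the word `π(i) π(i+1) … π(i+r-1)` (positions `0`-indexed)
is order-isomorphic to the pattern word `p 0, …, p (r-1)`. -/
def ConsecOcc {n r : ℕ} (p : Fin r → ℕ) (π : Equiv.Perm (Fin n)) (i : ℕ) : Prop :=
  ∃ h : i + r ≤ n, ∀ j k : Fin r,
    (π ⟨i + j.val, by have := j.isLt; omega⟩ < π ⟨i + k.val, by have := k.isLt; omega⟩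
      ↔ p j < p k)

/-- The number of consecutive occurrences of the pattern `p` in `π`. -/
noncomputable def occCount {n r : ℕ} (p : Fin r → ℕ) (π : Equiv.Perm (Fin n)) : ℕ :=
  Nat.card {i : ℕ // ConsecOcc p π i}

/-- `π` has no consecutive occurrence of any pattern in `ps`. -/
def AvoidsAll {n r : ℕ} (ps : List (Fin r → ℕ)) (π : Equiv.Perm (Fin n)) : Prop :=
  ∀ p ∈ ps, ∀ i, ¬ ConsecOcc p π i

-- Total number of consecutive occurrences of `p` over all size-`n` permutations satisfying `P`.
open scoped Classical in
noncomputable def totOcc {n r : ℕ} (p : Fin r → ℕ) (P : Equiv.Perm (Fin n) → Prop) : ℕ :=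
  ∑ π : Equiv.Perm (Fin n), if P π then occCount p π else 0

/-- The number of size-`n` permutations satisfying `P`. -/
noncomputable def classCard (n : ℕ) (P : Equiv.Perm (Fin n) → Prop) : ℕ :=
  Nat.card {π : Equiv.Perm (Fin n) // P π}

def p123 : Fin 3 → ℕ := ![1,2,3]
def p132 : Fin 3 → ℕ := ![1,3,2]
def p213 : Fin 3 → ℕ := ![2,1,3]
def p231 : Fin 3 → ℕ := ![2,3,1]
def p312 : Fin 3 → ℕ := ![3,1,2]
def p321 : Fin 3 → ℕ := ![3,2,1]

/-- The number of involutions of `{1,…,n}`. -/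
noncomputable def involCard (n : ℕ) : ℕ :=
  Nat.card {π : Equiv.Perm (Fin n) // π * π = 1}

-- Total number of fixed points over all involutions of size `n`.
open scoped Classical in
noncomputable def fpTotal (n : ℕ) : ℕ :=
  ∑ π : Equiv.Perm (Fin n),
    if π * π = 1 then (Finset.univ.filter (fun i => π i = i)).card else 0

section Aux
open Equiv Equiv.Perm

lemma decFin_fst {n : ℕ} (π : Perm (Fin (n+1))) : (decomposeFin π).1 = π 0 := by
  conv_rhs => rw [← decomposeFin.symm_apply_apply π]
  rw [show decomposeFin π = ((decomposeFin π).1, (decomposeFin π).2) from rfl,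
    decomposeFin_symm_apply_zero]

lemma g0_succ {n : ℕ} (e : Perm (Fin n)) (x : Fin n) :
    decomposeFin.symm (0, e) x.succ = (e x).succ := by
  simp [decomposeFin_symm_apply_succ]

lemma invol0 {n : ℕ} (e : Perm (Fin n)) :
    decomposeFin.symm (0, e) * decomposeFin.symm (0, e) = 1 ↔ e * e = 1 := by
  constructor
  · intro h
    ext x
    have := Equiv.ext_iff.1 h x.succ
    simp only [Perm.mul_apply, g0_succ, Perm.one_apply] at this ⊢
    exact congrArg Fin.val (Fin.succ_injective _ this)
  · intro h
    ext y
    refine Fin.cases ?_ (fun x => ?_) y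
    · simp [Perm.mul_apply, decomposeFin_symm_apply_zero]
    · have := Equiv.ext_iff.1 h x
      simp only [Perm.mul_apply, g0_succ, Perm.one_apply] at this ⊢
      rw [this]

noncomputable def fix0Equiv (n : ℕ) :
    {π : Perm (Fin (n+1)) // π * π = 1 ∧ π 0 = 0} ≃ {e : Perm (Fin n) // e * e = 1} where
  toFun π := ⟨(decomposeFin π.1).2, by
    obtain ⟨π, h1, h2⟩ := π
    have hdec : decomposeFin π = (0, (decomposeFin π).2) := by
      rw [show decomposeFin π = ((decomposeFin π).1, (decomposeFin π).2) from rfl, decFin_fst, h2]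
    have : π = decomposeFin.symm (0, (decomposeFin π).2) := by
      rw [← hdec, decomposeFin.symm_apply_apply]
    rw [← invol0, ← this]; exact h1⟩
  invFun e := ⟨decomposeFin.symm (0, e.1), (invol0 e.1).2 e.2, decomposeFin_symm_apply_zero _ _⟩
  left_inv π := by
    obtain ⟨π, h1, h2⟩ := π
    apply Subtype.ext
    simp only
    have hdec : decomposeFin π = (0, (decomposeFin π).2) := by
      rw [show decomposeFin π = ((decomposeFin π).1, (decomposeFin π).2) from rfl, decFin_fst, h2]
    rw [← hdec, decomposeFin.symm_apply_apply]
  right_inv e := by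
    apply Subtype.ext
    simp only
    rw [decomposeFin.apply_symm_apply]

lemma conj_invol {m : ℕ} {s π : Perm (Fin m)} (hs : s * s = 1) (hπ : π * π = 1) :
    (s * π * s) * (s * π * s) = 1 := by
  calc (s * π * s) * (s * π * s) = s * π * (s * s) * π * s := by group
  _ = s * (π * π) * s := by rw [hs]; group
  _ = s * s := by rw [hπ]; group
  _ = 1 := hs

lemma invol_apply_apply {m : ℕ} {s : Perm (Fin m)} (hs : s * s = 1) (x : Fin m) :
    s (s x) = x := by
  have := Equiv.ext_iff.1 hs x
  simpa using this

noncomputable def conjEquiv {m : ℕ} (s : Perm (Fin m)) (hs : s * s = 1) (a b : Fin m) :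
    {π : Perm (Fin m) // π * π = 1 ∧ π a = b} ≃
      {π : Perm (Fin m) // π * π = 1 ∧ π (s a) = s b} where
  toFun π := ⟨s * π.1 * s, conj_invol hs π.2.1, by
    simp only [Perm.mul_apply, invol_apply_apply hs, π.2.2]⟩
  invFun π := ⟨s * π.1 * s, conj_invol hs π.2.1, by
    have := π.2.2
    simp only [Perm.mul_apply] at this ⊢
    rw [this, invol_apply_apply hs]⟩
  left_inv π := by
    apply Subtype.ext
    simp only
    calc s * (s * π.1 * s) * s = (s * s) * π.1 * (s * s) := by group
    _ = π.1 := by rw [hs]; group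
  right_inv π := by
    apply Subtype.ext
    simp only
    calc s * (s * π.1 * s) * s = (s * s) * π.1 * (s * s) := by group
    _ = π.1 := by rw [hs]; group

/-- `g e`: 0 ↔ 1 swapped, rest acts as `e` shifted by 2. -/
noncomputable def gg {n : ℕ} (e : Perm (Fin n)) : Perm (Fin (n+2)) :=
  decomposeFin.symm (1, decomposeFin.symm (0, e))

lemma gg_zero {n : ℕ} (e : Perm (Fin n)) : gg e 0 = 1 :=
  decomposeFin_symm_apply_zero _ _

lemma gg_one {n : ℕ} (e : Perm (Fin n)) : gg e 1 = 0 := by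
  rw [gg, ← Fin.succ_zero_eq_one, decomposeFin_symm_apply_succ,
    decomposeFin_symm_apply_zero, Fin.succ_zero_eq_one, swap_apply_right]

lemma gg_succ_succ {n : ℕ} (e : Perm (Fin n)) (x : Fin n) :
    gg e x.succ.succ = (e x).succ.succ := by
  rw [gg, decomposeFin_symm_apply_succ, g0_succ]
  apply swap_apply_of_ne_of_ne
  · exact Fin.succ_ne_zero _
  · rw [← Fin.succ_zero_eq_one]
    intro h
    exact Fin.succ_ne_zero _ (Fin.succ_injective _ h)

lemma invol_gg {n : ℕ} (e : Perm (Fin n)) : gg e * gg e = 1 ↔ e * e = 1 := by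
  constructor
  · intro h
    ext x
    have := Equiv.ext_iff.1 h x.succ.succ
    simp only [Perm.mul_apply, gg_succ_succ, Perm.one_apply] at this
    exact congrArg Fin.val (Fin.succ_injective _ (Fin.succ_injective _ this))
  · intro h
    ext y
    refine Fin.cases ?_ (fun x => ?_) y
    · simp [Perm.mul_apply, gg_zero, gg_one]
    · refine Fin.cases ?_ (fun z => ?_) x
      · simp [Perm.mul_apply, Fin.succ_zero_eq_one, gg_zero, gg_one]
      · have := Equiv.ext_iff.1 h z
        simp only [Perm.mul_apply, gg_succ_succ, Perm.one_apply] at this ⊢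
        rw [this]

lemma reconstruct {n : ℕ} (π : Perm (Fin (n+2))) (h0 : π 0 = 1) (h1 : π 1 = 0) :
    π = gg (decomposeFin (decomposeFin π).2).2 := by
  set e₁ := (decomposeFin π).2 with he₁
  have hπ : π = decomposeFin.symm (1, e₁) := by
    conv_lhs => rw [← decomposeFin.symm_apply_apply π]
    rw [show decomposeFin π = ((decomposeFin π).1, e₁) from rfl, decFin_fst, h0]
  have he0 : e₁ 0 = 0 := by
    have h2 : swap (0 : Fin (n+2)) 1 (e₁ 0).succ = 0 := by
      rw [← decomposeFin_symm_apply_one e₁ 1, ← hπ, h1]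
    have h3 := congrArg (swap (0 : Fin (n+2)) 1) h2
    rw [swap_apply_self, swap_apply_left] at h3
    rw [← Fin.succ_zero_eq_one] at h3
    exact Fin.succ_injective _ h3
  have he₁' : e₁ = decomposeFin.symm (0, (decomposeFin e₁).2) := by
    conv_lhs => rw [← decomposeFin.symm_apply_apply e₁]
    rw [show decomposeFin e₁ = ((decomposeFin e₁).1, (decomposeFin e₁).2) from rfl,
      decFin_fst, he0]
  rw [gg, ← he₁', ← hπ]

noncomputable def pairEquiv (n : ℕ) :
    {π : Perm (Fin (n+2)) // π * π = 1 ∧ π 0 = 1} ≃ {e : Perm (Fin n) // e * e = 1} where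
  toFun π := ⟨(decomposeFin (decomposeFin π.1).2).2, by
    obtain ⟨π, h1, h2⟩ := π
    have h3 : π 1 = 0 := by
      conv_lhs => rw [← h2]
      rw [invol_apply_apply h1]
    rw [← invol_gg, ← reconstruct π h2 h3]
    exact h1⟩
  invFun e := ⟨gg e.1, (invol_gg e.1).2 e.2, gg_zero _⟩
  left_inv π := by
    obtain ⟨π, h1, h2⟩ := π
    apply Subtype.ext
    simp only
    have h3 : π 1 = 0 := by
      conv_lhs => rw [← h2]
      rw [invol_apply_apply h1]
    exact (reconstruct π h2 h3).symm
  right_inv e := by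
    apply Subtype.ext
    simp only [gg]
    rw [decomposeFin.apply_symm_apply]
    rw [show ((1 : Fin (n+2)), decomposeFin.symm ((0 : Fin (n+1)), e.1)).2
        = decomposeFin.symm ((0 : Fin (n+1)), e.1) from rfl]
    rw [decomposeFin.apply_symm_apply]

noncomputable def involCard' (n : ℕ) : ℕ :=
  Nat.card {π : Equiv.Perm (Fin n) // π * π = 1}

lemma cardFix (n : ℕ) (i : Fin (n+1)) :
    Nat.card {π : Perm (Fin (n+1)) // π * π = 1 ∧ π i = i} = involCard' n := by
  have e1 := conjEquiv (swap 0 i) (swap_mul_self 0 i) i i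
  rw [swap_apply_right] at e1
  rw [Nat.card_congr e1, Nat.card_congr (fix0Equiv n), involCard']

lemma cardPair (n : ℕ) (j : Fin (n+2)) (hj : j ≠ 0) :
    Nat.card {π : Perm (Fin (n+2)) // π * π = 1 ∧ π 0 = j} = involCard' n := by
  have e1 := conjEquiv (swap 1 j) (swap_mul_self 1 j) 0 1
  have h0 : swap (1 : Fin (n+2)) j 0 = 0 := by
    apply swap_apply_of_ne_of_ne
    · exact zero_ne_one
    · exact Ne.symm hj
  rw [h0, swap_apply_left] at e1
  rw [← Nat.card_congr e1, Nat.card_congr (pairEquiv n), involCard']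

lemma card_as_filter {m : ℕ} (P : Perm (Fin m) → Prop) [DecidablePred P] :
    Nat.card {π : Perm (Fin m) // P π} = (Finset.univ.filter P).card := by
  rw [Nat.card_eq_fintype_card, Fintype.card_subtype]

lemma involCard_rec (n : ℕ) :
    involCard' (n+2) = involCard' (n+1) + (n+1) * involCard' n := by
  rw [involCard', card_as_filter]
  rw [Finset.card_eq_sum_card_fiberwise
    (f := fun π : Perm (Fin (n+2)) => π 0) (t := Finset.univ) (fun x _ => Finset.mem_univ _)]
  have hterm : ∀ j : Fin (n+2),
      (Finset.filter (fun π => (π : Perm (Fin (n+2))) 0 = j)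
        (Finset.univ.filter (fun π : Perm (Fin (n+2)) => π * π = 1))).card
      = Nat.card {π : Perm (Fin (n+2)) // π * π = 1 ∧ π 0 = j} := by
    intro j
    rw [Finset.filter_filter, card_as_filter]
  rw [Fin.sum_univ_succ]
  rw [hterm 0, cardFix (n+1) 0]
  have : ∀ i : Fin (n+1),
      (Finset.filter (fun π => (π : Perm (Fin (n+2))) 0 = i.succ)
        (Finset.univ.filter (fun π : Perm (Fin (n+2)) => π * π = 1))).card
      = involCard' n := by
    intro i
    rw [hterm i.succ, cardPair n i.succ (Fin.succ_ne_zero i)]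
  rw [Finset.sum_congr rfl (fun i _ => this i), Finset.sum_const, Finset.card_univ,
    Fintype.card_fin, smul_eq_mul]

open scoped Classical in
noncomputable def fpTotal' (n : ℕ) : ℕ :=
  ∑ π : Equiv.Perm (Fin n),
    if π * π = 1 then (Finset.univ.filter (fun i => π i = i)).card else 0

lemma fpTotal_eq (n : ℕ) : fpTotal' (n+1) = (n+1) * involCard' n := by
  rw [fpTotal']
  have step1 : ∀ π : Perm (Fin (n+1)),
      (if π * π = 1 then (Finset.univ.filter (fun i => π i = i)).card else 0)
      = ∑ i : Fin (n+1), if π * π = 1 ∧ π i = i then 1 else 0 := by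
    intro π
    by_cases h : π * π = 1
    · simp only [h, if_true, true_and, Finset.card_filter]
    · simp [h]
  rw [Finset.sum_congr rfl (fun π _ => step1 π), Finset.sum_comm]
  have step2 : ∀ i : Fin (n+1),
      (∑ π : Perm (Fin (n+1)), if π * π = 1 ∧ π i = i then 1 else 0) = involCard' n := by
    intro i
    rw [← Finset.card_filter, ← card_as_filter, cardFix n i]
  rw [Finset.sum_congr rfl (fun i _ => step2 i), Finset.sum_const, Finset.card_univ,
    Fintype.card_fin, smul_eq_mul]

lemma involCard_zero : involCard' 0 = 1 := by
  haveI : Unique {π : Perm (Fin 0) // π * π = 1} :=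
    ⟨⟨⟨1, one_mul 1⟩⟩, by
      intro a; apply Subtype.ext; ext x; exact x.elim0⟩
  exact Nat.card_unique

lemma involCard_one : involCard' 1 = 1 := by
  haveI : Unique {π : Perm (Fin 1) // π * π = 1} :=
    ⟨⟨⟨1, one_mul 1⟩⟩, by
      intro a; apply Subtype.ext; ext x
      have := Subsingleton.elim (a.1 x) x
      simp [this]⟩
  exact Nat.card_unique

lemma involCard_pos (n : ℕ) : 0 < involCard' n := by
  haveI : Nonempty {π : Perm (Fin n) // π * π = 1} := ⟨⟨1, one_mul 1⟩⟩
  exact Nat.card_pos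

lemma involCard_bounds : ∀ n : ℕ,
    Real.sqrt (n+1) * involCard' n ≤ involCard' (n+1) ∧
    (involCard' (n+1) : ℝ) ≤ (Real.sqrt (n+1) + 1) * involCard' n := by
  intro n
  induction n with
  | zero => norm_num [involCard_zero, involCard_one]
  | succ n ih =>
    obtain ⟨h1, h2⟩ := ih
    set s := Real.sqrt ((n:ℝ)+1) with hs
    have hs0 : 0 ≤ s := Real.sqrt_nonneg _
    have hs2 : s^2 = (n:ℝ)+1 := Real.sq_sqrt (by positivity)
    set t := Real.sqrt ((n:ℝ)+2) with ht
    have ht1 : 1 ≤ t := by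
      rw [ht, show (1:ℝ) = Real.sqrt 1 from Real.sqrt_one.symm]
      exact Real.sqrt_le_sqrt (by have := Nat.cast_nonneg (α := ℝ) n; linarith)
    have hst : s ≤ t := Real.sqrt_le_sqrt (by norm_num)
    have ht2 : t^2 = (n:ℝ)+2 := Real.sq_sqrt (by positivity)
    have hA0 : (0:ℝ) ≤ involCard' n := Nat.cast_nonneg _
    have hA1 : (0:ℝ) ≤ involCard' (n+1) := Nat.cast_nonneg _
    have hrec : (involCard' (n+2) : ℝ) = involCard' (n+1) + ((n:ℝ)+1) * involCard' n := by
      rw [involCard_rec]; push_cast; ring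
    have hcast : ((n:ℝ)+1+1) = (n:ℝ)+2 := by ring
    have hcast2 : Real.sqrt (↑(n+1)+1) = t := by rw [ht]; push_cast; ring_nf
    constructor
    · rw [hcast2, hrec]
      -- t * A(n+1) ≤ A(n+1) + (n+1) * A n
      have key : t * (s+1) ≤ s^2 + s + 1 := by
        have h4 : ((n:ℝ)+2) * (s+1)^2 ≤ (s^2+s+1)^2 := by nlinarith [sq_nonneg s]
        calc t * (s+1) = Real.sqrt (((n:ℝ)+2) * (s+1)^2) := by
              rw [Real.sqrt_mul (by positivity), Real.sqrt_sq (by positivity)]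
        _ ≤ Real.sqrt ((s^2+s+1)^2) := Real.sqrt_le_sqrt h4
        _ = s^2+s+1 := Real.sqrt_sq (by positivity)
      nlinarith [mul_le_mul_of_nonneg_left h2 (sub_nonneg.2 ht1),
        mul_le_mul_of_nonneg_right key hA0]
    · rw [hcast2, hrec]
      -- A(n+1) + (n+1) * A n ≤ (t+1) * A(n+1)
      have h5 : s * (s * (involCard' n : ℝ)) ≤ s * involCard' (n+1) :=
        mul_le_mul_of_nonneg_left h1 hs0
      nlinarith [mul_le_mul_of_nonneg_right hst hA1]

lemma sqrt_nat_tendsto : Filter.Tendsto (fun n : ℕ => Real.sqrt n) Filter.atTop Filter.atTop := by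
  apply Filter.tendsto_atTop.2
  intro b
  filter_upwards [Filter.eventually_ge_atTop (Nat.ceil (b^2) + 1)] with n hn
  have : (b^2 : ℝ) ≤ n := by
    calc (b^2:ℝ) ≤ Nat.ceil (b^2) := Nat.le_ceil _
    _ ≤ n := by exact_mod_cast Nat.le_of_succ_le hn
  calc b ≤ |b| := le_abs_self b
  _ = Real.sqrt (b^2) := (Real.sqrt_sq_eq_abs b).symm
  _ ≤ Real.sqrt n := Real.sqrt_le_sqrt this

theorem main' : Filter.Tendsto (fun n : ℕ => (fpTotal' n : ℝ) / (Real.sqrt n * involCard' n))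
    Filter.atTop (nhds 1) := by
  have hlow : Filter.Tendsto (fun n : ℕ => Real.sqrt n / (Real.sqrt n + 1))
      Filter.atTop (nhds 1) := by
    have h2 : Filter.Tendsto (fun n : ℕ => Real.sqrt n + 1) Filter.atTop Filter.atTop :=
      Filter.tendsto_atTop_add_const_right _ 1 sqrt_nat_tendsto
    have h3 : Filter.Tendsto (fun n : ℕ => (Real.sqrt n + 1)⁻¹) Filter.atTop (nhds 0) :=
      h2.inv_tendsto_atTop
    have h4 := (tendsto_const_nhds (x := (1:ℝ)) (f := Filter.atTop (α := ℕ))).sub h3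
    rw [sub_zero] at h4
    refine h4.congr (fun n => ?_)
    have hpos : Real.sqrt n + 1 ≠ 0 := by positivity
    field_simp
    ring
  refine tendsto_of_tendsto_of_tendsto_of_le_of_le' hlow tendsto_const_nhds ?_ ?_
  · filter_upwards [Filter.eventually_ge_atTop 1] with n hn
    obtain ⟨m, rfl⟩ : ∃ m, n = m + 1 := ⟨n - 1, by omega⟩
    obtain ⟨hb1, hb2⟩ := involCard_bounds m
    set t := Real.sqrt ((m:ℝ)+1) with htdef
    have ht0 : 0 < t := Real.sqrt_pos.2 (by positivity)
    have ht2 : t^2 = (m:ℝ)+1 := Real.sq_sqrt (by positivity)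
    have hc : (0:ℝ) < involCard' m := by exact_mod_cast involCard_pos m
    have hd : (0:ℝ) < involCard' (m+1) := by exact_mod_cast involCard_pos (m+1)
    have hfp : (fpTotal' (m+1) : ℝ) = ((m:ℝ)+1) * involCard' m := by
      rw [fpTotal_eq]; push_cast; ring
    have hcast : Real.sqrt ((m+1 : ℕ) : ℝ) = t := by rw [htdef]; push_cast; ring_nf
    simp only [hfp, hcast]
    rw [div_le_div_iff₀ (by positivity) (by positivity)]
    nlinarith [mul_le_mul_of_nonneg_left hb2 (show (0:ℝ) ≤ (m:ℝ)+1 by positivity),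
      ht2, hd.le, hc.le, ht0.le]
  · filter_upwards [Filter.eventually_ge_atTop 1] with n hn
    obtain ⟨m, rfl⟩ : ∃ m, n = m + 1 := ⟨n - 1, by omega⟩
    obtain ⟨hb1, hb2⟩ := involCard_bounds m
    set t := Real.sqrt ((m:ℝ)+1) with htdef
    have ht0 : 0 < t := Real.sqrt_pos.2 (by positivity)
    have ht2 : t^2 = (m:ℝ)+1 := Real.sq_sqrt (by positivity)
    have hc : (0:ℝ) < involCard' m := by exact_mod_cast involCard_pos m
    have hd : (0:ℝ) < involCard' (m+1) := by exact_mod_cast involCard_pos (m+1)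
    have hfp : (fpTotal' (m+1) : ℝ) = ((m:ℝ)+1) * involCard' m := by
      rw [fpTotal_eq]; push_cast; ring
    have hcast : Real.sqrt ((m+1 : ℕ) : ℝ) = t := by rw [htdef]; push_cast; ring_nf
    simp only [hfp, hcast]
    rw [div_le_one (by positivity)]
    nlinarith [mul_le_mul_of_nonneg_left hb1 ht0.le, ht2]

end Aux

theorem stmt7 :
    Filter.Tendsto (fun n : ℕ => (fpTotal n : ℝ) / (Real.sqrt n * involCard n))
      Filter.atTop (nhds 1) := by
  have h1 : fpTotal = fpTotal' := rfl
  have h2 : involCard = involCard' := rfl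
  rw [h1, h2]
  exact main'
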